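/- Let X, Y be Hilbert spaces, τ, σ > 0, and A: X → Y a bounded linear operator with στ‖A‖² < 1. Then the self-adjoint block operator M on X × Y given by M(ξ,η) = (τ^{-1}ξ − A*η, −Aξ + σ^{-1}η) satisfies θ²·Id ≤ M ≤ Θ²·Id for some constants 0 < θ ≤ Θ, i.e., θ²(‖ξ‖² + ‖η‖²) ≤ ⟨M(ξ,η),(ξ,η)⟩ ≤ Θ²(‖ξ‖² + ‖η‖²) for all (ξ,η) ∈ X × Y. -/

import Mathlib

set_option maxHeartbeats 1600000 in
/-- Uniform bounds `θ²Id ≤ M ≤ Θ²Id` for the preconditioning block operator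
`M(ξ,η) = (τ⁻¹ξ − A*η, −Aξ + σ⁻¹η)`, stated via the quadratic form
`⟨M(ξ,η),(ξ,η)⟩ = τ⁻¹‖ξ‖² − 2⟨Aξ,η⟩ + σ⁻¹‖η‖²`. -/
theorem stmt_19 {X Y : Type*}
    [NormedAddCommGroup X] [InnerProductSpace ℝ X] [CompleteSpace X]
    [NormedAddCommGroup Y] [InnerProductSpace ℝ Y] [CompleteSpace Y]
    (τ σ : ℝ) (hτ : 0 < τ) (hσ : 0 < σ)
    (A : X →L[ℝ] Y) (hA : σ * τ * ‖A‖ ^ 2 < 1) :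
    ∃ θ Θ : ℝ, 0 < θ ∧ θ ≤ Θ ∧ ∀ (ξ : X) (η : Y),
      θ ^ 2 * (‖ξ‖ ^ 2 + ‖η‖ ^ 2) ≤
          τ⁻¹ * ‖ξ‖ ^ 2 - 2 * (inner ℝ (A ξ) η : ℝ) + σ⁻¹ * ‖η‖ ^ 2 ∧
      τ⁻¹ * ‖ξ‖ ^ 2 - 2 * (inner ℝ (A ξ) η : ℝ) + σ⁻¹ * ‖η‖ ^ 2 ≤
          Θ ^ 2 * (‖ξ‖ ^ 2 + ‖η‖ ^ 2) := by
  set p : ℝ := τ⁻¹ with hp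
  set q : ℝ := σ⁻¹ with hq
  have hp0 : 0 < p := inv_pos.2 hτ
  have hq0 : 0 < q := inv_pos.2 hσ
  set a : ℝ := ‖A‖ with haa
  have ha0 : 0 ≤ a := norm_nonneg A
  set sp : ℝ := Real.sqrt p with hsp
  set sq : ℝ := Real.sqrt q with hsq
  have hsp0 : 0 < sp := Real.sqrt_pos.2 hp0
  have hsq0 : 0 < sq := Real.sqrt_pos.2 hq0
  have hsp2 : sp ^ 2 = p := Real.sq_sqrt hp0.le
  have hsq2 : sq ^ 2 = q := Real.sq_sqrt hq0.le
  have hpq1 : p * q * (σ * τ) = 1 := by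
    rw [hp, hq]; field_simp
  have hapq : a ^ 2 < p * q := by
    nlinarith [mul_pos hσ hτ]
  have ha : a < sp * sq := by
    nlinarith [mul_pos hsp0 hsq0]
  set m : ℝ := min p q with hm
  have hm0 : 0 < m := lt_min hp0 hq0
  set c : ℝ := m * (sp * sq - a) / (sp * sq) with hc
  have hc0 : 0 < c := by
    apply div_pos (mul_pos hm0 (by linarith)) (mul_pos hsp0 hsq0)
  have hcmul : c * (sp * sq) = m * (sp * sq - a) := by
    rw [hc, div_mul_cancel₀]
    exact (mul_pos hsp0 hsq0).ne'
  set C : ℝ := p + q + a with hC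
  have hcC : c ≤ C := by
    have h1 : c ≤ m := by
      rw [hc, div_le_iff₀ (mul_pos hsp0 hsq0)]
      nlinarith
    have : m ≤ p := min_le_left _ _
    nlinarith
  refine ⟨Real.sqrt c, Real.sqrt C, Real.sqrt_pos.2 hc0, Real.sqrt_le_sqrt hcC, ?_⟩
  intro ξ η
  rw [Real.sq_sqrt hc0.le, Real.sq_sqrt (by nlinarith : (0:ℝ) ≤ C)]
  set u : ℝ := ‖ξ‖ with hu
  set v : ℝ := ‖η‖ with hv
  clear_value p q a sp sq m c C u v
  have hu0 : 0 ≤ u := by rw [hu]; exact norm_nonneg ξ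
  have hv0 : 0 ≤ v := by rw [hv]; exact norm_nonneg η
  have hip : |(inner ℝ (A ξ) η : ℝ)| ≤ a * u * v := by
    rw [haa, hu, hv]
    calc |(inner ℝ (A ξ) η : ℝ)| ≤ ‖A ξ‖ * ‖η‖ := abs_real_inner_le_norm _ _
    _ ≤ (‖A‖ * ‖ξ‖) * ‖η‖ := by
        gcongr
        exact A.le_opNorm ξ
    _ = ‖A‖ * ‖ξ‖ * ‖η‖ := by ring
  have hip1 : (inner ℝ (A ξ) η : ℝ) ≤ a * u * v := (abs_le.1 hip).2
  have hip2 : -(a * u * v) ≤ (inner ℝ (A ξ) η : ℝ) := (abs_le.1 hip).1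
  constructor
  · -- lower bound
    have key : c * (u ^ 2 + v ^ 2) ≤ p * u ^ 2 - 2 * (a * u * v) + q * v ^ 2 := by
      have hmul : c * (u ^ 2 + v ^ 2) * (sp * sq) ≤
          (p * u ^ 2 - 2 * (a * u * v) + q * v ^ 2) * (sp * sq) := by
        rw [← hsp2, ← hsq2]
        rcases le_total p q with hpq | hpq
        · have hc' : c * (sp * sq) = sp ^ 2 * (sp * sq - a) := by
            rw [hcmul, hm, min_eq_left hpq, hsp2]
          have h1 : 0 ≤ a * (sp * u - sq * v) ^ 2 := by positivity
          have h2 : 0 ≤ (sq ^ 2 - sp ^ 2) * (sp * sq - a) * v ^ 2 := by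
            apply mul_nonneg (mul_nonneg (by nlinarith) (by linarith))
            positivity
          have heq : (sp ^ 2 * u ^ 2 - 2 * (a * u * v) + sq ^ 2 * v ^ 2) * (sp * sq)
              - c * (u ^ 2 + v ^ 2) * (sp * sq)
              = a * (sp * u - sq * v) ^ 2 + (sq ^ 2 - sp ^ 2) * (sp * sq - a) * v ^ 2 := by
            linear_combination (-(u ^ 2 + v ^ 2)) * hc'
          linarith
        · have hc' : c * (sp * sq) = sq ^ 2 * (sp * sq - a) := by
            rw [hcmul, hm, min_eq_right hpq, hsq2]
          have h1 : 0 ≤ a * (sp * u - sq * v) ^ 2 := by positivity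
          have h2 : 0 ≤ (sp ^ 2 - sq ^ 2) * (sp * sq - a) * u ^ 2 := by
            apply mul_nonneg (mul_nonneg (by nlinarith) (by linarith))
            positivity
          have heq : (sp ^ 2 * u ^ 2 - 2 * (a * u * v) + sq ^ 2 * v ^ 2) * (sp * sq)
              - c * (u ^ 2 + v ^ 2) * (sp * sq)
              = a * (sp * u - sq * v) ^ 2 + (sp ^ 2 - sq ^ 2) * (sp * sq - a) * u ^ 2 := by
            linear_combination (-(u ^ 2 + v ^ 2)) * hc'
          linarith
      exact le_of_mul_le_mul_right hmul (mul_pos hsp0 hsq0)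
    nlinarith [key, hip1]
  · -- upper bound
    nlinarith [hip2, mul_nonneg ha0 (sq_nonneg (u - v)),
      mul_nonneg hp0.le (sq_nonneg v), mul_nonneg hq0.le (sq_nonneg u)]
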